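/- Every perfect (σ,k)-permutiple [a_0; a_1, …, a_n] is a Landess permutiple; that is, it is continuant-preserving and satisfies q_{n−1} = q'_{n−1} and p_{n−1} = k·p'_{n−1}, where p_j = K_{j+1}(a_0, …, a_j), q_j = K_j(a_1, …, a_j) are the convergent numerators and denominators of [a_0; …, a_n] and p'_j, q'_j are those of [a_{σ(0)}; …, a_{σ(n)}]. -/

import Mathlib

/-- Value of the finite simple continued fraction `[x₀; x₁, …, xₙ]`. -/
def cfv : List ℚ → ℚ
  | [] => 0
  | [x] => x
  | x :: y :: t => x + 1 / cfv (y :: t)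

/-- The continuant `K(x₀, …, xₙ)`: `K() = 1`, `K(x₀) = x₀`, and the usual
three-term recurrence. -/
def cont : List ℕ → ℕ
  | [] => 1
  | [x] => x
  | x :: y :: t => x * cont (y :: t) + cont t

/-- The digit string of `a`, as a list of rationals. -/
def digitsQ {N : ℕ} (a : Fin N → ℕ) : List ℚ := (List.ofFn a).map (fun x => (x : ℚ))

/-- `[a₀; a₁, …, aₙ]` (canonical: positive digits, last digit ≥ 2) is a
`(σ,k)`-permutiple: it equals `k` times the continued fraction of the permuted digits. -/
def IsPermutiple {n : ℕ} (a : Fin (n+1) → ℕ) (σ : Equiv.Perm (Fin (n+1))) (k : ℕ) : Prop :=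
  (∀ j, 0 < a j) ∧ 2 ≤ a (Fin.last n) ∧ 1 < k ∧
    cfv (digitsQ a) = k * cfv (digitsQ (a ∘ σ))

/-- A `(σ,k)`-permutiple is continuant-preserving if
`K(a₀,…,aₙ) = K(a_{σ(0)},…,a_{σ(n)})`. -/
def ContinuantPreserving {n : ℕ} (a : Fin (n+1) → ℕ) (σ : Equiv.Perm (Fin (n+1))) : Prop :=
  cont (List.ofFn a) = cont (List.ofFn (a ∘ σ))

/-- A `(σ,k)`-permutiple is perfect if `a_j = k·a_{σ(j)}` for even `j` and
`a_{σ(j)} = k·a_j` for odd `j`. -/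
def IsPerfect {n : ℕ} (a : Fin (n+1) → ℕ) (σ : Equiv.Perm (Fin (n+1))) (k : ℕ) : Prop :=
  ∀ j : Fin (n+1), (Even (j : ℕ) → a j = k * a (σ j)) ∧ (Odd (j : ℕ) → a (σ j) = k * a j)

/-- A `(σ,k)`-permutiple is symmetric if `a_j·a_{n−j} = a_{σ(j)}·a_{σ(n−j)}` for all `j`. -/
def IsSymmetric {n : ℕ} (a : Fin (n+1) → ℕ) (σ : Equiv.Perm (Fin (n+1))) : Prop :=
  ∀ j : Fin (n+1), a j * a j.rev = a (σ j) * a (σ j.rev)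

/-- A Landess permutiple: a continuant-preserving `(σ,k)`-permutiple with
`q_{n−1} = q'_{n−1}` and `p_{n−1} = k·p'_{n−1}`. -/
def IsLandess {n : ℕ} (a : Fin (n+1) → ℕ) (σ : Equiv.Perm (Fin (n+1))) (k : ℕ) : Prop :=
  IsPermutiple a σ k ∧ ContinuantPreserving a σ ∧
    cont ((List.ofFn a).tail.dropLast) = cont ((List.ofFn (a ∘ σ)).tail.dropLast) ∧
    cont ((List.ofFn a).dropLast) = k * cont ((List.ofFn (a ∘ σ)).dropLast)

/- auxiliary -/


def contQ : List ℚ → ℚ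
  | [] => 1
  | [x] => x
  | x :: y :: t => x * contQ (y :: t) + contQ t

lemma cont_cast : ∀ l : List ℕ, (cont l : ℚ) = contQ (l.map (fun x : ℕ => (x : ℚ)))
  | [] => by simp [cont, contQ]
  | [x] => by simp [cont, contQ]
  | x :: y :: t => by
      have h1 := cont_cast (y :: t)
      have h2 := cont_cast t
      simp only [List.map_cons] at h1 ⊢
      simp only [cont, contQ]
      rw [← h1, ← h2]
      push_cast
      ring

lemma ofFn_tail' {α : Type*} {m : ℕ} (f : Fin (m+1) → α) :
    (List.ofFn f).tail = List.ofFn (fun i : Fin m => f i.succ) := by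
  rw [List.ofFn_succ]; rfl

lemma ofFn_dropLast' {α : Type*} {m : ℕ} (f : Fin (m+1) → α) :
    (List.ofFn f).dropLast = List.ofFn (fun i : Fin m => f i.castSucc) := by
  rw [List.ofFn_succ', List.concat_eq_append, List.dropLast_concat]

lemma keyQ (k : ℚ) : ∀ m (f g : Fin m → ℚ),
    ((∀ i : Fin m, (Even i.1 → g i * k = f i) ∧ (¬ Even i.1 → g i = k * f i)) →
      contQ (List.ofFn g) * k ^ ((m+1)/2) = contQ (List.ofFn f) * k ^ (m/2)) ∧
    ((∀ i : Fin m, (Even i.1 → g i = k * f i) ∧ (¬ Even i.1 → g i * k = f i)) →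
      contQ (List.ofFn g) * k ^ (m/2) = contQ (List.ofFn f) * k ^ ((m+1)/2))
  | 0 => by intro f g; simp [contQ]
  | 1 => by
      intro f g
      constructor
      · intro hrel
        have h0 := (hrel 0).1 (by simp)
        simpa [List.ofFn_succ, contQ] using h0
      · intro hrel
        have h0 := (hrel 0).1 (by simp)
        simp [List.ofFn_succ, contQ, h0]
        ring
  | (m+2) => by
      intro f g
      have hlist : ∀ {α : Type} (h : Fin (m+2) → α), List.ofFn h =
          h 0 :: h 1 :: List.ofFn (fun i : Fin m => h i.succ.succ) := by
        intro α h
        rw [List.ofFn_succ, List.ofFn_succ]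
        rfl
      have e1 : (m+2+1)/2 = (m+1)/2 + 1 := by omega
      have e2 : (m+2)/2 = m/2 + 1 := by omega
      have hsv : ∀ i : Fin (m+1), (i.succ : Fin (m+2)).1 = i.1 + 1 := fun i => rfl
      have hsv2 : ∀ i : Fin m, ((i.succ.succ : Fin (m+2))).1 = i.1 + 2 := fun i => rfl
      constructor
      · intro hrel
        have ihA := (keyQ k (m+1) (fun i => f i.succ) (fun i => g i.succ)).2
          (by
            intro i
            constructor
            · intro he
              exact (hrel i.succ).2 (by rw [hsv]; simpa [Nat.even_add_one] using he)
            · intro ho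
              exact (hrel i.succ).1 (by rw [hsv]; simpa [Nat.even_add_one] using ho))
        have ihB := (keyQ k m (fun i => f i.succ.succ) (fun i => g i.succ.succ)).1
          (by
            intro i
            constructor
            · intro he
              exact (hrel i.succ.succ).1 (by rw [hsv2]; simpa [Nat.even_add_one, Nat.even_add] using he)
            · intro ho
              exact (hrel i.succ.succ).2 (by rw [hsv2]; simpa [Nat.even_add_one, Nat.even_add] using ho))
        have h0 : g 0 * k = f 0 := (hrel 0).1 (by simp)
        have h1 : g 1 = k * f 1 := (hrel 1).2 (by simp [show ((1 : Fin (m+2))).1 = 1 from rfl])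
        rw [hlist f, hlist g]
        simp only [contQ]
        rw [e1, e2, ← h0, h1]
        rw [show ((List.ofFn fun i : Fin (m+1) => f i.succ) : List ℚ) =
          f 1 :: List.ofFn (fun i : Fin m => f i.succ.succ) from by rw [List.ofFn_succ]; rfl] at ihA
        rw [show ((List.ofFn fun i : Fin (m+1) => g i.succ) : List ℚ) =
          g 1 :: List.ofFn (fun i : Fin m => g i.succ.succ) from by rw [List.ofFn_succ]; rfl] at ihA
        rw [e2] at ihA
        rw [h1] at ihA
        linear_combination (g 0 * k) * ihA + k * ihB
      · intro hrel
        have ihA := (keyQ k (m+1) (fun i => f i.succ) (fun i => g i.succ)).1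
          (by
            intro i
            constructor
            · intro he
              exact (hrel i.succ).2 (by rw [hsv]; simpa [Nat.even_add_one] using he)
            · intro ho
              exact (hrel i.succ).1 (by rw [hsv]; simpa [Nat.even_add_one] using ho))
        have ihB := (keyQ k m (fun i => f i.succ.succ) (fun i => g i.succ.succ)).2
          (by
            intro i
            constructor
            · intro he
              exact (hrel i.succ.succ).1 (by rw [hsv2]; simpa [Nat.even_add_one, Nat.even_add] using he)
            · intro ho
              exact (hrel i.succ.succ).2 (by rw [hsv2]; simpa [Nat.even_add_one, Nat.even_add] using ho))
        have h0 : g 0 = k * f 0 := (hrel 0).1 (by simp)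
        have h1 : g 1 * k = f 1 := (hrel 1).2 (by simp [show ((1 : Fin (m+2))).1 = 1 from rfl])
        rw [hlist f, hlist g]
        simp only [contQ]
        rw [e1, e2, h0, ← h1]
        rw [show ((List.ofFn fun i : Fin (m+1) => f i.succ) : List ℚ) =
          f 1 :: List.ofFn (fun i : Fin m => f i.succ.succ) from by rw [List.ofFn_succ]; rfl] at ihA
        rw [show ((List.ofFn fun i : Fin (m+1) => g i.succ) : List ℚ) =
          g 1 :: List.ofFn (fun i : Fin m => g i.succ.succ) from by rw [List.ofFn_succ]; rfl] at ihA
        rw [e2, ← h1] at ihA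
        linear_combination (f 0 * k) * ihA + k * ihB

lemma parity_aux {n k : ℕ} (hk : 1 < k) (a : Fin (n+1) → ℕ) (σ : Equiv.Perm (Fin (n+1)))
    (hpos : ∀ j, 0 < a j) (hp : IsPerfect a σ k) : Even (n+1) := by
  classical
  set E := Finset.univ.filter (fun j : Fin (n+1) => Even (j : ℕ)) with hE
  set O := Finset.univ.filter (fun j : Fin (n+1) => ¬ Even (j : ℕ)) with hO
  have h1 : ∏ j ∈ E, a j = k ^ E.card * ∏ j ∈ E, a (σ j) := by
    rw [← Finset.prod_const, ← Finset.prod_mul_distrib]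
    exact Finset.prod_congr rfl fun j hj => (hp j).1 (by simpa [hE] using (Finset.mem_filter.mp hj).2)
  have h2 : ∏ j ∈ O, a (σ j) = k ^ O.card * ∏ j ∈ O, a j := by
    rw [← Finset.prod_const, ← Finset.prod_mul_distrib]
    exact Finset.prod_congr rfl fun j hj =>
      (hp j).2 (Nat.not_even_iff_odd.mp (by simpa [hO] using (Finset.mem_filter.mp hj).2))
  have hsplit1 : (∏ j ∈ E, a j) * ∏ j ∈ O, a j = ∏ j, a j :=
    Finset.prod_filter_mul_prod_filter_not _ _ _
  have hsplit2 : (∏ j ∈ E, a (σ j)) * ∏ j ∈ O, a (σ j) = ∏ j, a (σ j) :=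
    Finset.prod_filter_mul_prod_filter_not _ _ _
  have hperm : ∏ j, a (σ j) = ∏ j, a j := Equiv.prod_comp σ a
  have key : k ^ E.card * ((∏ j ∈ E, a (σ j)) * ∏ j ∈ O, a j)
      = k ^ O.card * ((∏ j ∈ E, a (σ j)) * ∏ j ∈ O, a j) := by
    have : (k ^ E.card * ∏ j ∈ E, a (σ j)) * ∏ j ∈ O, a j
        = (∏ j ∈ E, a (σ j)) * (k ^ O.card * ∏ j ∈ O, a j) := by
      rw [← h1, ← h2, hsplit1, hsplit2, hperm]
    linarith [this]
  have hposE : 0 < (∏ j ∈ E, a (σ j)) * ∏ j ∈ O, a j := by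
    apply Nat.mul_pos <;> exact Finset.prod_pos (fun j _ => hpos _)
  have hpow : k ^ E.card = k ^ O.card := Nat.eq_of_mul_eq_mul_right hposE key
  have hcard : E.card = O.card := Nat.pow_right_injective hk hpow
  have htot : E.card + O.card = n + 1 := by
    have := Finset.card_filter_add_card_filter_not (s := (Finset.univ : Finset (Fin (n+1)))) (fun j => Even (j : ℕ))
    simpa [hE, hO] using this
  exact ⟨E.card, by omega⟩

/-- Every perfect `(σ,k)`-permutiple is a Landess permutiple: it is
continuant-preserving and satisfies `q_{n−1} = q'_{n−1}` and `p_{n−1} = k·p'_{n−1}`. -/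
theorem stmt19 {n : ℕ} (a : Fin (n+1) → ℕ) (σ : Equiv.Perm (Fin (n+1))) (k : ℕ)
    (h : IsPermutiple a σ k) (hp : IsPerfect a σ k) :
    IsLandess a σ k := by
  obtain ⟨hpos, hlast, hk1, hcfv⟩ := h
  have hne : Even (n+1) := parity_aux hk1 a σ hpos hp
  obtain ⟨t, ht⟩ : ∃ t, n = 2*t + 1 := by
    obtain ⟨s, hs⟩ := hne; exact ⟨s - 1, by omega⟩
  subst ht
  have hkQ : (k : ℚ) ≠ 0 := by positivity
  set b : Fin (2*t+1+1) → ℕ := a ∘ σ with hb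
  have hrel : ∀ i : Fin (2*t+1+1),
      (Even i.1 → ((b i : ℚ)) * k = a i) ∧ (¬ Even i.1 → ((b i : ℚ)) = k * a i) := by
    intro i
    constructor
    · intro he
      have h1 := (hp i).1 he
      have h2 : (a i : ℚ) = (k : ℚ) * (a (σ i) : ℚ) := by exact_mod_cast h1
      rw [hb]; simp only [Function.comp]; linarith [h2]
    · intro ho
      have h1 := (hp i).2 (Nat.not_even_iff_odd.mp ho)
      have h2 : (a (σ i) : ℚ) = (k : ℚ) * (a i : ℚ) := by exact_mod_cast h1
      rw [hb]; simp only [Function.comp]; linarith [h2]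
  have cancel : ∀ (x y : ℚ) (e : ℕ), x * (k:ℚ) ^ e = y * (k:ℚ) ^ e → x = y := by
    intro x y e hxy
    exact mul_right_cancel₀ (pow_ne_zero e hkQ) hxy
  refine ⟨⟨hpos, hlast, hk1, hcfv⟩, ?_, ?_, ?_⟩
  · -- ContinuantPreserving
    unfold ContinuantPreserving
    rw [← Nat.cast_inj (R := ℚ), cont_cast, cont_cast, List.map_ofFn, List.map_ofFn]
    have := (keyQ (k : ℚ) (2*t+1+1) (fun i => (a i : ℚ)) (fun i => (b i : ℚ))).1
      (fun i => hrel i)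
    have e1 : (2*t+1+1+1)/2 = t+1 := by omega
    have e2 : (2*t+1+1)/2 = t+1 := by omega
    rw [e1, e2] at this
    exact (cancel _ _ _ this).symm
  · -- tail.dropLast
    rw [← Nat.cast_inj (R := ℚ)]
    rw [ofFn_tail' a, ofFn_tail' (a ∘ σ), ofFn_dropLast', ofFn_dropLast']
    rw [cont_cast, cont_cast, List.map_ofFn, List.map_ofFn]
    have := (keyQ (k : ℚ) (2*t) (fun i => (a i.castSucc.succ : ℚ)) (fun i => (b i.castSucc.succ : ℚ))).2
      (by
        intro i
        have hv : (i.castSucc.succ : Fin (2*t+1+1)).1 = i.1 + 1 := rfl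
        constructor
        · intro he
          exact (hrel i.castSucc.succ).2 (by rw [hv]; simpa [Nat.even_add_one] using he)
        · intro ho
          exact (hrel i.castSucc.succ).1 (by rw [hv]; simpa [Nat.even_add_one] using ho))
    have e1 : (2*t+1)/2 = t := by omega
    have e2 : (2*t)/2 = t := by omega
    rw [e1, e2] at this
    have := cancel _ _ _ this
    convert this.symm using 2 <;> rfl
  · -- dropLast
    rw [← Nat.cast_inj (R := ℚ), ofFn_dropLast' a, ofFn_dropLast' (a ∘ σ)]
    push_cast
    rw [cont_cast, cont_cast, List.map_ofFn, List.map_ofFn]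
    have := (keyQ (k : ℚ) (2*t+1) (fun i => (a i.castSucc : ℚ)) (fun i => (b i.castSucc : ℚ))).1
      (by
        intro i
        have hv : (i.castSucc : Fin (2*t+1+1)).1 = i.1 := rfl
        constructor
        · intro he
          exact (hrel i.castSucc).1 (by rw [hv]; exact he)
        · intro ho
          exact (hrel i.castSucc).2 (by rw [hv]; exact ho))
    have e1 : (2*t+1+1)/2 = t+1 := by omega
    have e2 : (2*t+1)/2 = t := by omega
    rw [e1, e2, pow_succ] at this
    have h2 : contQ (List.ofFn fun i : Fin (2*t+1) => ((b i.castSucc : ℕ) : ℚ)) * (k:ℚ) * (k:ℚ)^t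
        = contQ (List.ofFn fun i : Fin (2*t+1) => ((a i.castSucc : ℕ) : ℚ)) * (k:ℚ)^t := by
      linarith [this]
    have h3 := cancel _ _ _ h2
    simp only [hb, Function.comp_def] at h3
    simp only [Function.comp_def]
    linarith [h3]
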